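/- arXiv:0806.0434 — 2 statements merged into one kernel-verified Lean document; each statement's English description precedes it below -/
import Mathlib

section
/- Let n ≥ 3 and let 0 ≤ i ≤ ⌊(n−1)/2⌋ − 1. Then the number p_{n,i} of sets S ∈ P_n with |S| = i + 1 equals ((n − 2i − 2)/(i + 1)) · C(n−1, i). -/
open Finset Polynomial

/-- `σ` is a permutation of `[n] = {1, …, n}` (viewed as a function `ℕ → ℕ`
restricted to a bijection of `{1, …, n}` onto itself). -/
def IsPermOn (n : ℕ) (σ : ℕ → ℕ) : Prop :=
  Set.BijOn σ (Set.Icc 1 n) (Set.Icc 1 n)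

/-- The circular peak set of `σ` (as a permutation of `[n]`):
`CP(σ) = {σ(i) : 2 ≤ i ≤ n−1, σ(i−1) < σ(i) > σ(i+1)}`. -/
def CP (n : ℕ) (σ : ℕ → ℕ) : Finset ℕ :=
  ((Finset.Icc 2 (n - 1)).filter (fun i => σ (i - 1) < σ i ∧ σ (i + 1) < σ i)).image σ

open scoped Classical in
/-- `Pn n` is the collection of all subsets `S ⊆ [n]` arising as the circular peak
set of some permutation of `[n]`. -/
noncomputable def Pn (n : ℕ) : Finset (Finset ℕ) :=
  (Finset.Icc 1 n).powerset.filter (fun S => ∃ σ : ℕ → ℕ, IsPermOn n σ ∧ CP n σ = S)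

/-- `pcount n k` is the number of members of `Pn n` of cardinality `k`;
in the paper's notation, `p_{n,i} = pcount n (i+1)`. -/
noncomputable def pcount (n k : ℕ) : ℕ :=
  ((Pn n).filter (fun S => S.card = k)).card

/-- The f-polynomial `P_n(x) = Σ_{i=0}^{⌊(n−1)/2⌋} p_{n,i−1} x^{⌊(n−1)/2⌋−i}`. -/
noncomputable def fpoly (n : ℕ) : Polynomial ℚ :=
  ∑ i ∈ Finset.range ((n - 1) / 2 + 1),
    Polynomial.C (pcount n i : ℚ) * Polynomial.X ^ ((n - 1) / 2 - i)


def inter : List ℕ → List ℕ → List ℕ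
  | [], ys => ys
  | x :: xs, [] => x :: xs
  | x :: xs, y :: ys => x :: y :: inter xs ys

lemma inter_perm : ∀ xs ys : List ℕ, (inter xs ys).Perm (xs ++ ys)
  | [], ys => by simp [inter]
  | x :: xs, [] => by simp [inter]
  | x :: xs, y :: ys => by
    simp only [inter, List.cons_append]
    exact List.Perm.cons x (((inter_perm xs ys).cons y).trans List.perm_middle.symm)

lemma inter_length (xs ys : List ℕ) : (inter xs ys).length = xs.length + ys.length := by
  rw [(inter_perm xs ys).length_eq, List.length_append]

lemma inter_getD : ∀ ys xs : List ℕ, ys.length ≤ xs.length → ∀ p : ℕ,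
    (inter xs ys).getD p 0 =
      if p < 2 * ys.length then
        (if p % 2 = 0 then xs.getD (p / 2) 0 else ys.getD (p / 2) 0)
      else xs.getD (p - ys.length) 0
  | [], xs, h, p => by
    cases xs <;> simp [inter]
  | y :: ys, [], h, p => by simp at h
  | y :: ys, x :: xs, h, p => by
    simp only [List.length_cons] at h
    match p with
    | 0 => simp [inter]
    | 1 =>
      simp only [inter, List.getD_cons_succ, List.getD_cons_zero, List.length_cons]
      rw [if_pos (by omega)]
      norm_num
    | (p + 2) =>
      have h' : ys.length ≤ xs.length := by omega
      have ih := inter_getD ys xs h' p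
      simp only [inter, List.getD_cons_succ, ih, List.length_cons]
      rcases Nat.even_or_odd p with ⟨c, hc⟩ | ⟨c, hc⟩
      · subst hc
        split_ifs <;>
          first
          | omega
          | (rw [show (c + c + 2) / 2 = (c + c) / 2 + 1 from by omega, List.getD_cons_succ])
          | (rw [show c + c + 2 - (ys.length + 1) = (c + c - ys.length) + 1 from by omega,
              List.getD_cons_succ])
      · subst hc
        split_ifs <;>
          first
          | omega
          | (rw [show (2 * c + 1 + 2) / 2 = (2 * c + 1) / 2 + 1 from by omega,
              List.getD_cons_succ])
          | (rw [show 2 * c + 1 + 2 - (ys.length + 1) = (2 * c + 1 - ys.length) + 1 from by omega,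
              List.getD_cons_succ])

private lemma getD_sort_mono {F : Finset ℕ} {i j : ℕ} (hij : i < j)
    (hj : j < (F.sort (·≤·)).length) :
    (F.sort (·≤·)).getD i 0 < (F.sort (·≤·)).getD j 0 := by
  rw [List.getD_eq_getElem _ 0 (by omega), List.getD_eq_getElem _ 0 hj]
  exact List.Pairwise.rel_get_of_lt (Finset.sortedLT_sort F).pairwise (by simpa using hij)

private lemma getD_sort_mem {F : Finset ℕ} {i : ℕ} (hi : i < (F.sort (·≤·)).length) :
    (F.sort (·≤·)).getD i 0 ∈ F := by
  rw [List.getD_eq_getElem _ 0 hi]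
  rw [← Finset.mem_sort (α := ℕ) (· ≤ ·)]
  exact List.getElem_mem _

lemma sort_filter_le_card (F : Finset ℕ) (t : ℕ) (ht : t < (F.sort (·≤·)).length) :
    t + 1 ≤ (F.filter (· ≤ (F.sort (·≤·)).getD t 0)).card := by
  classical
  have hsub : (Finset.range (t+1)).image (fun j => (F.sort (·≤·)).getD j 0)
      ⊆ F.filter (· ≤ (F.sort (·≤·)).getD t 0) := by
    intro x hx
    obtain ⟨j, hj, rfl⟩ := Finset.mem_image.mp hx
    have hjr := Finset.mem_range.mp hj
    rw [Finset.mem_filter]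
    refine ⟨getD_sort_mem (by omega), ?_⟩
    rcases Nat.lt_or_ge j t with hlt | hge
    · exact le_of_lt (getD_sort_mono hlt ht)
    · have : j = t := by omega
      subst this; simp
  have hinj : Set.InjOn (fun j => (F.sort (·≤·)).getD j 0) (Finset.range (t+1)) := by
    intro i hi j hj hij
    simp only [Finset.coe_range, Set.mem_Iio] at hi hj
    have hij' : (F.sort (·≤·)).getD i 0 = (F.sort (·≤·)).getD j 0 := hij
    by_contra hne
    rcases Nat.lt_or_ge i j with hlt | hge
    · have := getD_sort_mono (F := F) hlt (by omega); omega
    · have hlt : j < i := by omega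
      have := getD_sort_mono (F := F) hlt (by omega); omega
  calc t + 1 = ((Finset.range (t+1)).image (fun j => (F.sort (·≤·)).getD j 0)).card := by
        rw [Finset.card_image_of_injOn hinj, Finset.card_range]
    _ ≤ _ := Finset.card_le_card hsub

lemma sort_filter_lt_card (F : Finset ℕ) (t : ℕ) (ht : t < (F.sort (·≤·)).length) :
    (F.filter (· < (F.sort (·≤·)).getD t 0)).card ≤ t := by
  classical
  have hsub : F.filter (· < (F.sort (·≤·)).getD t 0)
      ⊆ (Finset.range t).image (fun j => (F.sort (·≤·)).getD j 0) := by
    intro x hx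
    rw [Finset.mem_filter] at hx
    obtain ⟨hxF, hxlt⟩ := hx
    have hxmem : x ∈ F.sort (·≤·) := (Finset.mem_sort _).mpr hxF
    obtain ⟨ix, hix, hixx⟩ := List.mem_iff_getElem.mp hxmem
    have hgd : (F.sort (·≤·)).getD ix 0 = x := by
      rw [List.getD_eq_getElem _ 0 hix]; exact hixx
    have hixt : ix < t := by
      by_contra hge
      rcases Nat.eq_or_lt_of_le (Nat.le_of_not_lt hge) with heq | hlt
      · rw [heq] at hxlt; omega
      · have := getD_sort_mono hlt hix; omega
    exact Finset.mem_image.mpr ⟨ix, Finset.mem_range.mpr hixt, hgd⟩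
  calc (F.filter (· < (F.sort (·≤·)).getD t 0)).card
      ≤ ((Finset.range t).image (fun j => (F.sort (·≤·)).getD j 0)).card :=
        Finset.card_le_card hsub
    _ ≤ t := le_trans Finset.card_image_le (by rw [Finset.card_range])

lemma sort_getD_lt_of_card (F : Finset ℕ) (u c : ℕ) (hu : u < (F.sort (·≤·)).length)
    (hcard : u + 1 ≤ (F.filter (· < c)).card) : (F.sort (·≤·)).getD u 0 < c := by
  classical
  by_contra hge
  push_neg at hge
  have hsub : F.filter (· < c) ⊆ (Finset.range u).image (fun j => (F.sort (·≤·)).getD j 0) := by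
    intro x hx
    rw [Finset.mem_filter] at hx
    obtain ⟨hxF, hxlt⟩ := hx
    have hxmem : x ∈ F.sort (·≤·) := (Finset.mem_sort _).mpr hxF
    obtain ⟨ix, hix, hixx⟩ := List.mem_iff_getElem.mp hxmem
    have hgd : (F.sort (·≤·)).getD ix 0 = x := by
      rw [List.getD_eq_getElem _ 0 hix]; exact hixx
    have hixt : ix < u := by
      by_contra hge2
      rcases Nat.eq_or_lt_of_le (Nat.le_of_not_lt hge2) with heq | hlt
      · rw [heq] at hge; omega
      · have := getD_sort_mono hlt hix; omega
    exact Finset.mem_image.mpr ⟨ix, Finset.mem_range.mpr hixt, hgd⟩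
  have := le_trans (Finset.card_le_card hsub)
    (le_trans Finset.card_image_le (le_of_eq (Finset.card_range u)))
  omega

def condS (S : Finset ℕ) : Prop := ∀ m, 2 * (S.filter (· ≤ m)).card ≤ m - 1

open scoped Classical in
noncomputable def fset (n k : ℕ) : Finset (Finset ℕ) :=
  (Finset.Icc 1 n).powerset.filter (fun S => condS S ∧ S.card = k)

lemma condS_mono {S T : Finset ℕ} (hST : S ⊆ T) (hT : condS T) : condS S := by
  intro m
  exact le_trans (by
    have := Finset.card_le_card (Finset.filter_subset_filter (· ≤ m) hST)
    omega) (hT m)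

lemma fset_card_succ (n k : ℕ) (hk : 1 ≤ k) :
    (fset (n + 1) k).card =
      (fset n k).card + (if 2 * k ≤ n then (fset n (k - 1)).card else 0) := by
  classical
  have hcard : ((fset (n+1) k).filter (fun S => n+1 ∉ S)).card
      + ((fset (n+1) k).filter (fun S => n+1 ∈ S)).card = (fset (n+1) k).card := by
    rw [add_comm]
    exact Finset.card_filter_add_card_filter_not (fun S => n+1 ∈ S)
  have h1 : (fset (n+1) k).filter (fun S => n+1 ∉ S) = fset n k := by
    ext S
    simp only [Finset.mem_filter, fset, Finset.mem_powerset]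
    constructor
    · rintro ⟨⟨hsub, hc, hcd⟩, hni⟩
      refine ⟨fun x hx => ?_, hc, hcd⟩
      have := Finset.mem_Icc.mp (hsub hx)
      have : x ≠ n + 1 := fun h => hni (h ▸ hx)
      rw [Finset.mem_Icc]
      have := Finset.mem_Icc.mp (hsub hx)
      omega
    · rintro ⟨hsub, hc, hcd⟩
      refine ⟨⟨fun x hx => ?_, hc, hcd⟩, fun hmem => ?_⟩
      · have := Finset.mem_Icc.mp (hsub hx); rw [Finset.mem_Icc]; omega
      · have := Finset.mem_Icc.mp (hsub hmem); omega
  have h2 : ((fset (n+1) k).filter (fun S => n+1 ∈ S)).card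
      = if 2 * k ≤ n then (fset n (k - 1)).card else 0 := by
    by_cases h2k : 2 * k ≤ n
    · rw [if_pos h2k]
      apply Finset.card_bij (fun S _ => S.erase (n+1))
      · rintro S hS
        simp only [Finset.mem_filter, fset, Finset.mem_powerset] at hS ⊢
        obtain ⟨⟨hsub, hc, hcd⟩, hmem⟩ := hS
        refine ⟨fun x hx => ?_, condS_mono (Finset.erase_subset _ _) hc, ?_⟩
        · have hx' := Finset.mem_of_mem_erase hx
          have hne := Finset.ne_of_mem_erase hx
          have := Finset.mem_Icc.mp (hsub hx')
          rw [Finset.mem_Icc]; omega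
        · rw [Finset.card_erase_of_mem hmem, hcd]
      · rintro S hS T hT hET
        simp only [Finset.mem_filter] at hS hT
        rw [← Finset.insert_erase hS.2, ← Finset.insert_erase hT.2, hET]
      · rintro T hT
        simp only [Finset.mem_filter, fset, Finset.mem_powerset] at hT
        obtain ⟨hsub, hc, hcd⟩ := hT
        have hni : n + 1 ∉ T := fun h => by
          have := Finset.mem_Icc.mp (hsub h); omega
        refine ⟨insert (n+1) T, ?_, by rw [Finset.erase_insert hni]⟩
        simp only [Finset.mem_filter, fset, Finset.mem_powerset]
        refine ⟨⟨fun x hx => ?_, ?_, ?_⟩, Finset.mem_insert_self _ _⟩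
        · rcases Finset.mem_insert.mp hx with rfl | hx
          · rw [Finset.mem_Icc]; omega
          · have := Finset.mem_Icc.mp (hsub hx); rw [Finset.mem_Icc]; omega
        · intro m
          by_cases hm : n + 1 ≤ m
          · have hfil : (insert (n+1) T).filter (· ≤ m) = insert (n+1) (T.filter (· ≤ m)) := by
              rw [Finset.filter_insert, if_pos hm]
            rw [hfil]
            have hc1 : (insert (n+1) (T.filter (· ≤ m))).card ≤ (T.filter (· ≤ m)).card + 1 :=
              Finset.card_insert_le _ _
            have hc2 : (T.filter (· ≤ m)).card ≤ T.card := Finset.card_filter_le _ _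
            omega
          · have hfil : (insert (n+1) T).filter (· ≤ m) = T.filter (· ≤ m) := by
              rw [Finset.filter_insert, if_neg hm]
            rw [hfil]
            exact hc m
        · rw [Finset.card_insert_of_notMem hni, hcd]; omega
    · rw [if_neg h2k]
      rw [Finset.card_eq_zero, Finset.eq_empty_iff_forall_notMem]
      rintro S hS
      simp only [Finset.mem_filter, fset, Finset.mem_powerset] at hS
      obtain ⟨⟨hsub, hc, hcd⟩, hmem⟩ := hS
      have h1 := hc (n+1)
      have h2 : S.filter (· ≤ n+1) = S := by
        apply Finset.filter_true_of_mem
        intro x hx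
        exact (Finset.mem_Icc.mp (hsub hx)).2
      rw [h2, hcd] at h1
      omega
  rw [h1] at hcard; omega

lemma fset_zero (n : ℕ) : fset n 0 = {∅} := by
  classical
  ext S
  simp only [fset, Finset.mem_filter, Finset.mem_powerset, Finset.mem_singleton,
    Finset.card_eq_zero]
  constructor
  · rintro ⟨-, -, h⟩; exact h
  · rintro rfl
    refine ⟨Finset.empty_subset _, ?_, rfl⟩
    intro m; simp

lemma fset_empty_of_lt (n k : ℕ) (hk : 1 ≤ k) (h : n ≤ 2 * k) : fset n k = ∅ := by
  classical
  rw [Finset.eq_empty_iff_forall_notMem]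
  rintro S hS
  simp only [fset, Finset.mem_filter, Finset.mem_powerset] at hS
  obtain ⟨hsub, hcond, hcard⟩ := hS
  have h1 := hcond n
  have h2 : S.filter (· ≤ n) = S := by
    apply Finset.filter_true_of_mem
    intro x hx
    exact (Finset.mem_Icc.mp (hsub hx)).2
  rw [h2, hcard] at h1
  omega


lemma pascal (m k : ℕ) (hk : 1 ≤ k) :
    Nat.choose (m+1) k = Nat.choose m k + Nat.choose m (k-1) := by
  obtain ⟨j, rfl⟩ := Nat.exists_eq_add_of_le hk
  simp only [Nat.add_comm 1 j, Nat.add_sub_cancel]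
  rw [Nat.choose_succ_succ m j, Nat.add_comm]

lemma f_closed : ∀ n k : ℕ, 1 ≤ k → 2 * k + 1 ≤ n →
    (fset n k).card + Nat.choose (n - 1) (k - 1) = Nat.choose (n - 1) k := by
  intro n
  induction n with
  | zero => intro k hk h; omega
  | succ n ih =>
    intro k hk h
    have h2k : 2 * k ≤ n := by omega
    have hn1 : 1 ≤ n := by omega
    rw [fset_card_succ n k hk, if_pos h2k]
    simp only [Nat.add_sub_cancel]
    have hp1 := pascal (n-1) k hk
    rw [Nat.sub_add_cancel hn1] at hp1
    rcases Nat.eq_or_lt_of_le hk with hk1 | hk2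
    · -- k = 1
      rw [← hk1] at *
      have hf0 : (fset n 0).card = 1 := by rw [fset_zero]; rfl
      rw [hf0]
      simp only [Nat.sub_self, Nat.choose_zero_right, Nat.choose_one_right] at *
      rcases Nat.lt_or_ge n 3 with hn3 | hn3
      · have hn2 : n = 2 := by omega
        subst hn2
        have : (fset 2 1).card = 0 := by rw [fset_empty_of_lt 2 1 le_rfl (by omega)]; rfl
        omega
      · have ih1 := ih 1 le_rfl (by omega)
        simp only [Nat.sub_self, Nat.choose_zero_right, Nat.choose_one_right] at ih1
        omega
    · -- k ≥ 2
      have hp2 := pascal (n-1) (k-1) (by omega)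
      rw [Nat.sub_add_cancel hn1, (by omega : k - 1 - 1 = k - 2)] at hp2
      have ihk1 := ih (k-1) (by omega) (by omega)
      have hk2' : k - 1 - 1 = k - 2 := by omega
      rw [hk2'] at ihk1
      rcases Nat.lt_or_ge n (2*k+1) with hlt | hge
      · -- n = 2k
        have hz : (fset n k).card = 0 := by
          rw [fset_empty_of_lt n k hk (by omega)]; rfl
        have hsymm : Nat.choose (n-1) k = Nat.choose (n-1) (k-1) := by
          have hd : n - 1 - k = k - 1 := by omega
          rw [← hd]
          exact (Nat.choose_symm (by omega)).symm
        omega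
      · have ihk := ih k hk hge
        omega

lemma cond_of_perm (n : ℕ) (σ : ℕ → ℕ) (h : IsPermOn n σ) : condS (CP n σ) := by
  classical
  intro m
  set T : Finset ℕ := (Finset.Icc 2 (n-1)).filter
      (fun p => (σ (p-1) < σ p ∧ σ (p+1) < σ p) ∧ σ p ≤ m) with hT
  have hmemT : ∀ p, p ∈ T ↔ (2 ≤ p ∧ p ≤ n - 1) ∧ (σ (p-1) < σ p ∧ σ (p+1) < σ p) ∧ σ p ≤ m := by
    intro p
    rw [hT]
    simp only [Finset.mem_filter, Finset.mem_Icc]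
  -- the filtered CP is the image of T
  have himg : (CP n σ).filter (· ≤ m) = T.image σ := by
    ext x
    simp only [CP, Finset.mem_filter, Finset.mem_image, Finset.mem_Icc]
    constructor
    · rintro ⟨⟨p, hp, rfl⟩, hxm⟩
      exact ⟨p, (hmemT p).mpr ⟨hp.1, hp.2, hxm⟩, rfl⟩
    · rintro ⟨p, hp, rfl⟩
      obtain ⟨h1, h2, h3⟩ := (hmemT p).mp hp
      exact ⟨⟨p, ⟨h1, h2⟩, rfl⟩, h3⟩
  rw [himg]
  rcases Finset.eq_empty_or_nonempty T with hTe | hTne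
  · simp [hTe]
  -- now the main argument
  have hTsub : ∀ p ∈ T, 2 ≤ p ∧ p ≤ n - 1 ∧ σ (p-1) < σ p ∧ σ (p+1) < σ p ∧ σ p ≤ m := by
    intro p hp
    have := (hmemT p).mp hp
    tauto
  have hn3 : 2 ≤ n - 1 := by
    obtain ⟨p, hp⟩ := hTne
    have := hTsub p hp; omega
  set q := T.min' hTne with hq
  have hqT : q ∈ T := Finset.min'_mem T hTne
  have hq2 : 2 ≤ q := (hTsub q hqT).1
  set U : Finset ℕ := (T ∪ T.image (· + 1)) ∪ {q - 1} with hU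
  -- disjointness
  have hTdisj : Disjoint T (T.image (· + 1)) := by
    rw [Finset.disjoint_left]
    rintro p hp hp'
    obtain ⟨r, hr, hrp⟩ := Finset.mem_image.mp hp'
    have h2 := hTsub r hr
    have : r + 1 = p := hrp
    subst this
    have h1 := hTsub (r+1) hp
    simp only [Nat.add_sub_cancel] at h1
    omega
  have hqnot : q - 1 ∉ T ∪ T.image (· + 1) := by
    rw [Finset.mem_union]
    rintro (hmem | hmem)
    · have := Finset.min'_le T _ hmem; omega
    · obtain ⟨r, hr, hrp⟩ := Finset.mem_image.mp hmem
      have := Finset.min'_le T _ hr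
      have h2 := (hTsub r hr).1
      omega
  have hUcard : U.card = 2 * T.card + 1 := by
    rw [hU, Finset.card_union_of_disjoint (by simpa using hqnot),
        Finset.card_union_of_disjoint hTdisj,
        Finset.card_image_of_injective _ (add_left_injective 1)]
    simp; ring
  -- U ⊆ Icc 1 n
  have hUsub : ∀ u ∈ U, 1 ≤ u ∧ u ≤ n := by
    intro u hu
    simp only [hU, Finset.mem_union, Finset.mem_image, Finset.mem_singleton] at hu
    rcases hu with (hu | ⟨r, hr, rfl⟩) | rfl
    · have := hTsub u hu; omega
    · have := hTsub r hr; omega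
    · have := hTsub q hqT; omega
  -- σ maps U into [1, m]
  have hmaps : ∀ u ∈ U, 1 ≤ σ u ∧ σ u ≤ m := by
    intro u hu
    have h1 : 1 ≤ σ u := by
      have hu' := hUsub u hu
      have := h.mapsTo (Set.mem_Icc.mpr (by omega : 1 ≤ u ∧ u ≤ n))
      exact (Set.mem_Icc.mp this).1
    refine ⟨h1, ?_⟩
    simp only [hU, Finset.mem_union, Finset.mem_image, Finset.mem_singleton] at hu
    rcases hu with (hu | ⟨r, hr, rfl⟩) | rfl
    · exact (hTsub u hu).2.2.2.2
    · have := hTsub r hr; omega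
    · have hh := hTsub q hqT
      omega
  -- σ is injective on U
  have hinj : Set.InjOn σ U := by
    apply h.injOn.mono
    intro u hu
    have := hUsub u hu
    exact Set.mem_Icc.mpr (by omega)
  have himgcard : (U.image σ).card = U.card := Finset.card_image_of_injOn hinj
  have himgsub : U.image σ ⊆ Finset.Icc 1 m := by
    intro x hx
    obtain ⟨u, hu, rfl⟩ := Finset.mem_image.mp hx
    exact Finset.mem_Icc.mpr (hmaps u hu)
  have hle : U.card ≤ m := by
    calc U.card = (U.image σ).card := himgcard.symm
    _ ≤ (Finset.Icc 1 m).card := Finset.card_le_card himgsub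
    _ = m := by rw [Nat.card_Icc]; omega
  have hcard_le : (T.image σ).card ≤ T.card := Finset.card_image_le
  omega

def buildσ (n : ℕ) (L : List ℕ) : ℕ → ℕ :=
  fun i => if 1 ≤ i ∧ i ≤ n then L.getD (i - 1) 0 else i

lemma buildσ_isPermOn (n : ℕ) (L : List ℕ) (hlen : L.length = n)
    (hmem : ∀ x, x ∈ L ↔ x ∈ Finset.Icc 1 n) (hnd : L.Nodup) :
    IsPermOn n (buildσ n L) := by
  have hval : ∀ i, 1 ≤ i → i ≤ n → buildσ n L i = L.getD (i-1) 0 := by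
    intro i h1 h2; simp only [buildσ, if_pos (⟨h1, h2⟩ : 1 ≤ i ∧ i ≤ n)]
  refine ⟨?_, ?_, ?_⟩
  · intro i hi
    obtain ⟨h1, h2⟩ := Set.mem_Icc.mp hi
    rw [Set.mem_Icc, ← Finset.mem_Icc, ← hmem]
    rw [hval i h1 h2, List.getD_eq_getElem _ 0 (by omega)]
    exact List.getElem_mem _
  · intro i hi j hj hij
    obtain ⟨h1, h2⟩ := Set.mem_Icc.mp hi
    obtain ⟨h3, h4⟩ := Set.mem_Icc.mp hj
    rw [hval i h1 h2, hval j h3 h4,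
      List.getD_eq_getElem L 0 (show i - 1 < L.length by omega),
      List.getD_eq_getElem L 0 (show j - 1 < L.length by omega)] at hij
    have := (List.Nodup.getElem_inj_iff hnd).mp hij
    omega
  · intro x hx
    obtain ⟨h1, h2⟩ := Set.mem_Icc.mp hx
    have hxL : x ∈ L := (hmem x).mpr (Finset.mem_Icc.mpr ⟨h1, h2⟩)
    obtain ⟨ix, hix, hixx⟩ := List.mem_iff_getElem.mp hxL
    refine ⟨ix + 1, Set.mem_Icc.mpr ⟨by omega, by omega⟩, ?_⟩
    rw [hval (ix+1) (by omega) (by omega)]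
    have e : ix + 1 - 1 = ix := by omega
    rw [e, List.getD_eq_getElem L 0 hix]
    exact hixx

lemma perm_of_cond (n : ℕ) (S : Finset ℕ) (hS : S ⊆ Finset.Icc 1 n) (hc : condS S) :
    ∃ σ : ℕ → ℕ, IsPermOn n σ ∧ CP n σ = S := by
  classical
  obtain ⟨k, hk⟩ : ∃ k, S.card = k := ⟨S.card, rfl⟩
  set A := Finset.Icc 1 n \ S with hA
  set s := S.sort (·≤·) with hs
  set a := A.sort (·≤·) with ha
  set L := inter a s with hL
  have hkn : k ≤ n := by
    have := Finset.card_le_card hS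
    rw [hk, Nat.card_Icc] at this
    omega
  have h2k : k = 0 ∨ 2 * k + 1 ≤ n := by
    rcases Nat.eq_zero_or_pos k with h0 | hpos
    · exact Or.inl h0
    · right
      have h1 := hc n
      have h2 : S.filter (· ≤ n) = S :=
        Finset.filter_true_of_mem (fun x hx => (Finset.mem_Icc.mp (hS hx)).2)
      rw [h2, hk] at h1
      omega
  have hsl : s.length = k := by rw [hs, Finset.length_sort, hk]
  have hal : a.length = n - k := by
    rw [ha, Finset.length_sort, hA, Finset.card_sdiff_of_subset hS, Nat.card_Icc, hk]; omega
  have hsa : s.length ≤ a.length := by rw [hsl, hal]; omega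
  have hLlen : L.length = n := by rw [hL, inter_length, hsl, hal]; omega
  -- membership and nodup of L
  have hperm : L.Perm (a ++ s) := inter_perm a s
  have hmemL : ∀ x, x ∈ L ↔ x ∈ Finset.Icc 1 n := by
    intro x
    rw [hperm.mem_iff, List.mem_append, hs, ha, Finset.mem_sort, Finset.mem_sort]
    constructor
    · rintro (hx | hx)
      · exact (Finset.mem_sdiff.mp hx).1
      · exact hS hx
    · intro hx
      by_cases hxs : x ∈ S
      · exact Or.inr hxs
      · exact Or.inl (Finset.mem_sdiff.mpr ⟨hx, hxs⟩)
  have hnd : L.Nodup := by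
    rw [hperm.nodup_iff, List.nodup_append]
    refine ⟨Finset.sort_nodup _ _, Finset.sort_nodup _ _, ?_⟩
    intro x hxa y hxs rfl
    rw [ha, Finset.mem_sort] at hxa
    rw [hs, Finset.mem_sort] at hxs
    exact (Finset.mem_sdiff.mp hxa).2 hxs
  refine ⟨buildσ n L, buildσ_isPermOn n L hLlen hmemL hnd, ?_⟩
  -- value lemmas
  have hσv : ∀ i, 1 ≤ i → i ≤ n → buildσ n L i = L.getD (i-1) 0 := by
    intro i h1 h2; simp only [buildσ, if_pos (⟨h1, h2⟩ : 1 ≤ i ∧ i ≤ n)]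
  have hgetD : ∀ p, L.getD p 0 =
      if p < 2 * k then (if p % 2 = 0 then a.getD (p / 2) 0 else s.getD (p / 2) 0)
      else a.getD (p - k) 0 := by
    intro p
    rw [hL, inter_getD s a hsa p, hsl]
  have hve : ∀ t, t < k → buildσ n L (2*t+2) = s.getD t 0 := by
    intro t ht
    rw [hσv _ (by omega) (by omega : 2*t+2 ≤ n), (by omega : 2*t+2-1 = 2*t+1), hgetD]
    rw [if_pos (by omega), if_neg (by omega), (by omega : (2*t+1)/2 = t)]
  have hvo : ∀ t, t ≤ k → 2*t+1 ≤ n → buildσ n L (2*t+1) = a.getD t 0 := by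
    intro t ht hn
    rw [hσv _ (by omega) hn, (by omega : 2*t+1-1 = 2*t), hgetD]
    rcases Nat.lt_or_ge t k with h | h
    · rw [if_pos (by omega), if_pos (by omega), (by omega : 2*t/2 = t)]
    · rw [if_neg (by omega), (by omega : 2*t - k = t)]
  have hvt : ∀ p, 2*k+1 ≤ p → p ≤ n → buildσ n L p = a.getD (p - 1 - k) 0 := by
    intro p h1 h2
    rw [hσv _ (by omega) h2, hgetD, if_neg (by omega)]
  -- counting inequalities
  have hsg_lb : ∀ t, t < k → 2*t+3 ≤ s.getD t 0 := by
    intro t ht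
    have h1 := sort_filter_le_card S t (by rw [← hs, hsl]; exact ht)
    rw [← hs] at h1
    have h2 := hc (s.getD t 0)
    omega
  have hmono_a : ∀ i j, i < j → j < a.length → a.getD i 0 < a.getD j 0 := by
    intro i j hij hj
    have := getD_sort_mono (F := A) hij (by rw [← ha]; exact hj)
    rwa [← ha] at this
  have hag_lt : ∀ t, t < k → a.getD (t+1) 0 < s.getD t 0 := by
    intro t ht
    have hk1 : 1 ≤ k := by omega
    have h2k' : 2*k+1 ≤ n := by rcases h2k with h|h <;> omega
    have hcS : s.getD t 0 ∈ S := by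
      have := getD_sort_mem (F := S) (i := t) (by rw [← hs, hsl]; exact ht)
      rwa [← hs] at this
    have hcn : s.getD t 0 ≤ n := (Finset.mem_Icc.mp (hS hcS)).2
    have hc3 : 2*t+3 ≤ s.getD t 0 := hsg_lb t ht
    have hIccfil : (Finset.Icc 1 n).filter (· < s.getD t 0) = Finset.Icc 1 (s.getD t 0 - 1) := by
      ext x; simp only [Finset.mem_filter, Finset.mem_Icc]; omega
    have hSfil : (S.filter (· < s.getD t 0)).card ≤ t := by
      have := sort_filter_lt_card S t (by rw [← hs, hsl]; exact ht)
      rwa [← hs] at this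
    have hsplit : (Finset.Icc 1 n).filter (· < s.getD t 0) ⊆
        (A.filter (· < s.getD t 0)) ∪ (S.filter (· < s.getD t 0)) := by
      intro x hx
      simp only [Finset.mem_filter, Finset.mem_union, hA, Finset.mem_sdiff] at *
      by_cases hxS : x ∈ S
      · tauto
      · tauto
    have hcard : s.getD t 0 - 1 ≤ (A.filter (· < s.getD t 0)).card + t := by
      calc s.getD t 0 - 1 = ((Finset.Icc 1 n).filter (· < s.getD t 0)).card := by
            rw [hIccfil, Nat.card_Icc]; omega
        _ ≤ ((A.filter (· < s.getD t 0)) ∪ (S.filter (· < s.getD t 0))).card :=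
            Finset.card_le_card hsplit
        _ ≤ (A.filter (· < s.getD t 0)).card + (S.filter (· < s.getD t 0)).card :=
            Finset.card_union_le _ _
        _ ≤ _ := by omega
    have hA2 : t + 2 ≤ (A.filter (· < s.getD t 0)).card := by omega
    have := sort_getD_lt_of_card A (t+1) (s.getD t 0) (by rw [← ha, hal]; omega) hA2
    rwa [← ha] at this
  have hasg : ∀ t, t < k → a.getD t 0 < s.getD t 0 := by
    intro t ht
    have h2k' : 2*k+1 ≤ n := by rcases h2k with h|h <;> omega
    exact lt_trans (hmono_a t (t+1) (by omega) (by rw [hal]; omega)) (hag_lt t ht)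
  -- the peak position set
  have hfil : (Finset.Icc 2 (n-1)).filter
      (fun p => buildσ n L (p-1) < buildσ n L p ∧ buildσ n L (p+1) < buildσ n L p)
      = (Finset.range k).image (fun t => 2*t+2) := by
    ext p
    simp only [Finset.mem_filter, Finset.mem_Icc, Finset.mem_image, Finset.mem_range]
    constructor
    · rintro ⟨⟨hp2, hpn⟩, hpk1, hpk2⟩
      have hn3 : 3 ≤ n := by omega
      rcases Nat.lt_or_ge p (2*k+1) with hcase | hcase
      · have hk1 : 1 ≤ k := by omega
        rcases Nat.even_or_odd p with ⟨c, hcp⟩ | ⟨c, hcp⟩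
        · exact ⟨c - 1, by omega, by omega⟩
        · exfalso
          have hc1 : 1 ≤ c := by omega
          have hck : c < k := by omega
          have e1 : buildσ n L p = a.getD c 0 := by
            rw [hcp]; exact hvo c (by omega) (by omega)
          have e2 : buildσ n L (p+1) = s.getD c 0 := by
            rw [show p+1 = 2*c+2 by omega]; exact hve c hck
          have := hasg c hck
          omega
      · exfalso
        have e1 : buildσ n L p = a.getD (p-1-k) 0 := hvt p hcase (by omega)
        have e2 : buildσ n L (p+1) = a.getD (p-k) 0 := by
          rw [hvt (p+1) (by omega) (by omega), (by omega : p+1-1-k = p-k)]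
        have := hmono_a (p-1-k) (p-k) (by omega) (by rw [hal]; omega)
        omega
    · rintro ⟨t, ht, rfl⟩
      have hk1 : 1 ≤ k := by omega
      have h2k' : 2*k+1 ≤ n := by rcases h2k with h|h <;> omega
      refine ⟨⟨by omega, by omega⟩, ?_, ?_⟩
      · rw [show 2*t+2-1 = 2*t+1 by omega, hvo t (by omega) (by omega), hve t ht]
        exact hasg t ht
      · rw [show 2*t+2+1 = 2*(t+1)+1 by omega, hvo (t+1) (by omega) (by omega), hve t ht]
        exact hag_lt t ht
  -- conclude
  rw [CP, hfil, Finset.image_image]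
  ext x
  simp only [Finset.mem_image, Finset.mem_range, Function.comp]
  constructor
  · rintro ⟨t, ht, rfl⟩
    rw [hve t ht]
    have := getD_sort_mem (F := S) (i := t) (by rw [← hs, hsl]; exact ht)
    rwa [← hs] at this
  · intro hxS
    have hxs : x ∈ s := by rw [hs, Finset.mem_sort]; exact hxS
    obtain ⟨ix, hix, hixx⟩ := List.mem_iff_getElem.mp hxs
    refine ⟨ix, by rw [hsl] at hix; exact hix, ?_⟩
    rw [hve ix (by rw [hsl] at hix; exact hix), List.getD_eq_getElem s 0 hix]
    exact hixx


lemma pcount_eq_fset (n k : ℕ) : pcount n k = (fset n k).card := by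
  classical
  unfold pcount fset
  congr 1
  ext S
  simp only [Finset.mem_filter, Pn, Finset.mem_powerset]
  constructor
  · rintro ⟨⟨hsub, σ, hperm, hcp⟩, hcard⟩
    exact ⟨hsub, ⟨hcp ▸ cond_of_perm n σ hperm, hcard⟩⟩
  · rintro ⟨hsub, hcond, hcard⟩
    exact ⟨⟨hsub, perm_of_cond n S hsub hcond⟩, hcard⟩

/-- Corollary 3.1: for `0 ≤ i ≤ ⌊(n−1)/2⌋ − 1`, the number `p_{n,i}` of members of
`P_n` of cardinality `i+1` equals `((n − 2i − 2)/(i + 1)) · C(n−1, i)`. -/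
theorem Pn_face_count (n i : ℕ) (hn : 3 ≤ n) (hi : i + 1 ≤ (n - 1) / 2) :
    (pcount n (i + 1) : ℚ) =
      ((n : ℚ) - 2 * i - 2) / (i + 1) * (Nat.choose (n - 1) i : ℚ) := by
  have hn' : 2 * (i + 1) + 1 ≤ n := by omega
  have key := f_closed n (i + 1) (by omega) hn'
  rw [pcount_eq_fset]
  have hsimp : i + 1 - 1 = i := by omega
  rw [hsimp] at key
  have hchoose : Nat.choose (n-1) (i+1) * (i+1) = Nat.choose (n-1) i * (n - 1 - i) :=
    Nat.choose_succ_right_eq (n-1) i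
  have hcast : ((n - 1 - i : ℕ) : ℚ) = (n : ℚ) - 1 - i := by
    push_cast [Nat.cast_sub (by omega : i ≤ n - 1), Nat.cast_sub (by omega : 1 ≤ n)]
    ring
  have hq : ((fset n (i+1)).card : ℚ)
      = (Nat.choose (n-1) (i+1) : ℚ) - (Nat.choose (n-1) i : ℚ) := by
    have := congrArg (Nat.cast : ℕ → ℚ) key
    push_cast at this
    linarith
  rw [hq]
  have hq2 : (Nat.choose (n-1) (i+1) : ℚ) * (i+1)
      = (Nat.choose (n-1) i : ℚ) * ((n:ℚ) - 1 - i) := by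
    have := congrArg (Nat.cast : ℕ → ℚ) hchoose
    push_cast at this
    rw [hcast] at this
    linarith
  have hi1 : ((i : ℚ) + 1) ≠ 0 := by positivity
  field_simp
  nlinarith [hq2]
end

section
/- Let n ≥ 3 be even. Then the poset P_{n+1} (subsets of [n+1] arising as circular peak sets of permutations of [n+1], ordered by inclusion) is order-isomorphic to the product poset {0,1} × P_n, where {0,1} carries the order 0 < 1 and the product is ordered componentwise. An explicit isomorphism sends S ∈ P_{n+1} to (1, S \ {n+1}) if n+1 ∈ S and to (0, S) otherwise. -/
open Finset Polynomial

lemma sorted_getD_lt {l : List ℕ} (hl : l.Pairwise (· < ·)) {i j : ℕ}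
    (hij : i < j) (hj : j < l.length) : l.getD i 0 < l.getD j 0 := by
  rw [List.getD_eq_getElem l 0 (lt_trans hij hj), List.getD_eq_getElem l 0 hj]
  exact List.pairwise_iff_getElem.1 hl i j _ _ hij

lemma sorted_getD_le {l : List ℕ} (hl : l.Pairwise (· < ·)) {i j : ℕ}
    (hij : i ≤ j) (hj : j < l.length) : l.getD i 0 ≤ l.getD j 0 := by
  rcases eq_or_lt_of_le hij with rfl | h
  · exact le_refl _
  · exact (sorted_getD_lt hl h hj).le

lemma countP_le_of_le_getD {l : List ℕ} (hl : l.Pairwise (· < ·)) {j : ℕ} (hj : j < l.length)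
    {s : ℕ} (hs : s ≤ l.getD j 0) : l.countP (fun x => decide (x < s)) ≤ j := by
  have h2 : (l.drop j).countP (fun x => decide (x < s)) = 0 := by
    rw [List.countP_eq_zero]
    intro x hx
    obtain ⟨m, hm, rfl⟩ := List.mem_iff_getElem.1 hx
    have hlen : (l.drop j).length = l.length - j := List.length_drop
    have hjm : j + m < l.length := by omega
    have h1 : l.getD j 0 ≤ l.getD (j + m) 0 := sorted_getD_le hl (by omega) hjm
    rw [List.getD_eq_getElem l 0 hjm] at h1
    rw [List.getElem_drop]
    simp only [decide_eq_true_eq]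
    omega
  have hsplit : l.countP (fun x => decide (x < s)) =
      (l.take j).countP (fun x => decide (x < s)) + (l.drop j).countP (fun x => decide (x < s)) := by
    conv_lhs => rw [← List.take_append_drop j l]
    rw [List.countP_append]
  rw [hsplit, h2]
  have := List.countP_le_length (l := l.take j) (p := fun x => decide (x < s))
  have hlt : (l.take j).length = j := by rw [List.length_take]; omega
  omega

lemma getD_lt_of_countP {l : List ℕ} (hl : l.Pairwise (· < ·)) {j : ℕ} {s : ℕ}
    (h : j + 1 ≤ l.countP (fun x => decide (x < s))) : l.getD j 0 < s := by
  have hj : j < l.length := by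
    have := List.countP_le_length (l := l) (p := fun x => decide (x < s)); omega
  by_contra hcon
  push_neg at hcon
  have := countP_le_of_le_getD hl hj hcon
  omega

lemma countP_getD_self {l : List ℕ} (hl : l.Pairwise (· < ·)) {j : ℕ} (hj : j < l.length) :
    l.countP (fun x => decide (x ≤ l.getD j 0)) = j + 1 := by
  have h2 : (l.drop (j+1)).countP (fun x => decide (x ≤ l.getD j 0)) = 0 := by
    rw [List.countP_eq_zero]
    intro x hx
    obtain ⟨m, hm, rfl⟩ := List.mem_iff_getElem.1 hx
    have hlen : (l.drop (j+1)).length = l.length - (j+1) := List.length_drop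
    have hjm : j + 1 + m < l.length := by omega
    have h1 : l.getD j 0 < l.getD (j + 1 + m) 0 := sorted_getD_lt hl (by omega) hjm
    rw [List.getD_eq_getElem l 0 hjm] at h1
    rw [List.getElem_drop]
    simp only [decide_eq_true_eq]
    omega
  have h1 : (l.take (j+1)).countP (fun x => decide (x ≤ l.getD j 0)) = j + 1 := by
    rw [List.countP_eq_length.2, List.length_take]
    · omega
    · intro x hx
      obtain ⟨m, hm, rfl⟩ := List.mem_iff_getElem.1 hx
      have hlt : (l.take (j+1)).length = j + 1 := by rw [List.length_take]; omega
      have hml : m < l.length := by omega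
      rw [List.getElem_take]
      have h1 : l.getD m 0 ≤ l.getD j 0 := sorted_getD_le hl (by omega) hj
      rw [List.getD_eq_getElem l 0 hml] at h1
      simp only [decide_eq_true_eq]
      omega
  have hsplit : l.countP (fun x => decide (x ≤ l.getD j 0)) =
      (l.take (j+1)).countP (fun x => decide (x ≤ l.getD j 0))
      + (l.drop (j+1)).countP (fun x => decide (x ≤ l.getD j 0)) := by
    set p : ℕ → Bool := fun x => decide (x ≤ l.getD j 0) with hp
    conv_lhs => rw [← List.take_append_drop (j+1) l]
    rw [List.countP_append]
  omega

lemma card_filter_eq_countP (C : Finset ℕ) (p : ℕ → Prop) [DecidablePred p] :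
    (C.filter p).card = (C.sort (· ≤ ·)).countP (fun x => decide (p x)) := by
  have h1 : (C.filter p).card = Multiset.countP p C.val := by
    rw [Finset.card, Finset.filter_val, Multiset.countP_eq_card_filter]
  rw [h1]
  have h2 : (C.sort (· ≤ ·) : Multiset ℕ) = C.val := by
    rw [← Finset.coe_toList C]
    exact Quot.sound (Finset.sort_perm_toList _ _)
  rw [← h2]
  exact Multiset.coe_countP _ _

lemma CP_subset (n : ℕ) {σ : ℕ → ℕ} (h : IsPermOn n σ) : CP n σ ⊆ Finset.Icc 1 n := by
  intro s hs
  simp only [CP] at hs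
  obtain ⟨i, hi, rfl⟩ := Finset.mem_image.1 hs
  rw [Finset.mem_filter, Finset.mem_Icc] at hi
  have : σ i ∈ Set.Icc 1 n := h.mapsTo (Set.mem_Icc.2 ⟨by omega, by omega⟩)
  rw [Finset.mem_Icc]; exact Set.mem_Icc.1 this

lemma good_count (n : ℕ) {σ : ℕ → ℕ} (h : IsPermOn n σ) :
    ∀ s ∈ CP n σ, 2 * ((CP n σ).filter (fun t => t ≤ s)).card + 1 ≤ s := by
  classical
  intro s hs
  set T := (Finset.Icc 2 (n-1)).filter (fun i => (σ (i-1) < σ i ∧ σ (i+1) < σ i) ∧ σ i ≤ s)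
    with hT
  have hTsub : ∀ i ∈ T, 2 ≤ i ∧ i ≤ n - 1 ∧ σ (i-1) < σ i ∧ σ (i+1) < σ i ∧ σ i ≤ s := by
    intro i hi; rw [hT, Finset.mem_filter, Finset.mem_Icc] at hi; tauto
  have hne : T.Nonempty := by
    simp only [CP] at hs
    obtain ⟨i, hi, rfl⟩ := Finset.mem_image.1 hs
    rw [Finset.mem_filter] at hi
    exact ⟨i, by rw [hT, Finset.mem_filter]; exact ⟨hi.1, hi.2, le_refl _⟩⟩
  have hadj : ∀ i ∈ T, i + 1 ∉ T := by
    intro i hi hcon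
    have h1 := (hTsub i hi).2.2.2.1
    have h2 := (hTsub (i+1) hcon).2.2.1
    simp only [Nat.add_sub_cancel] at h2
    omega
  set m := T.min' hne with hm
  have hmT : m ∈ T := T.min'_mem hne
  have hm2 : 2 ≤ m := (hTsub m hmT).1
  set B := (T ∪ T.image (· + 1)) ∪ {m - 1} with hB
  have hd1 : Disjoint T (T.image (· + 1)) := by
    rw [Finset.disjoint_left]; intro x hx hx2
    obtain ⟨i, hi, rfl⟩ := Finset.mem_image.1 hx2
    exact hadj i hi hx
  have hd2 : Disjoint (T ∪ T.image (· + 1)) {m - 1} := by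
    rw [Finset.disjoint_right]; intro x hx2 hx
    rw [Finset.mem_singleton] at hx2
    subst hx2
    rcases Finset.mem_union.1 hx with hx | hx
    · have := T.min'_le _ hx; omega
    · obtain ⟨i, hi, hieq⟩ := Finset.mem_image.1 hx
      have h5 : i + 1 = m - 1 := hieq
      have := T.min'_le _ hi
      omega
  have hinj1 : Function.Injective (· + 1 : ℕ → ℕ) := add_left_injective 1
  have hcardB : B.card = 2 * T.card + 1 := by
    rw [hB, Finset.card_union_of_disjoint hd2, Finset.card_union_of_disjoint hd1,
        Finset.card_image_of_injective _ hinj1, Finset.card_singleton]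
    ring
  have hBval : ∀ x ∈ B, (1 ≤ x ∧ x ≤ n) ∧ σ x ≤ s := by
    intro x hx
    rcases Finset.mem_union.1 hx with hx | hx
    · rcases Finset.mem_union.1 hx with hx | hx
      · have := hTsub x hx; exact ⟨⟨by omega, by omega⟩, this.2.2.2.2⟩
      · obtain ⟨i, hi, rfl⟩ := Finset.mem_image.1 hx
        have := hTsub i hi
        exact ⟨⟨by omega, by omega⟩, by omega⟩
    · rw [Finset.mem_singleton] at hx
      subst hx
      have := hTsub m hmT
      exact ⟨⟨by omega, by omega⟩, by omega⟩
  have hBIcc : (B : Set ℕ) ⊆ Set.Icc 1 n := by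
    intro x hx
    have := hBval x hx
    exact Set.mem_Icc.2 ⟨this.1.1, this.1.2⟩
  have hBimg : B.image σ ⊆ Finset.Icc 1 s := by
    intro y hy
    obtain ⟨x, hx, rfl⟩ := Finset.mem_image.1 hy
    have h1 := hBval x hx
    have h2 : σ x ∈ Set.Icc 1 n := h.mapsTo (Set.mem_Icc.2 h1.1)
    rw [Finset.mem_Icc]
    exact ⟨(Set.mem_Icc.1 h2).1, h1.2⟩
  have hcardimg : (B.image σ).card = B.card :=
    Finset.card_image_of_injOn (h.injOn.mono hBIcc)
  have hcards : B.card ≤ s := by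
    have := Finset.card_le_card hBimg
    rw [hcardimg] at this
    simpa using this
  have himg : (CP n σ).filter (fun t => t ≤ s) = T.image σ := by
    ext y
    simp only [CP, Finset.mem_filter, Finset.mem_image, hT]
    constructor
    · rintro ⟨⟨i, hi, rfl⟩, hle⟩
      exact ⟨i, ⟨hi.1, hi.2, hle⟩, rfl⟩
    · rintro ⟨i, hi, rfl⟩
      exact ⟨⟨i, ⟨hi.1, hi.2.1⟩, rfl⟩, hi.2.2⟩
  have hTIcc : (T : Set ℕ) ⊆ Set.Icc 1 n := by
    intro x hx
    have := hTsub x hx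
    exact Set.mem_Icc.2 ⟨by omega, by omega⟩
  have hcardT : ((CP n σ).filter (fun t => t ≤ s)).card = T.card := by
    rw [himg, Finset.card_image_of_injOn (h.injOn.mono hTIcc)]
  omega

lemma exists_perm_of_good (n : ℕ) (hn : 1 ≤ n) (S : Finset ℕ) (hsub : S ⊆ Finset.Icc 1 n)
    (hgood : ∀ s ∈ S, 2 * (S.filter (fun t => t ≤ s)).card + 1 ≤ s) :
    ∃ σ : ℕ → ℕ, IsPermOn n σ ∧ CP n σ = S := by
  classical
  set k := S.card with hk
  set C : Finset ℕ := Finset.Icc 1 n \ S with hCdef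
  set sl := S.sort (· ≤ ·) with hsldef
  set cl := C.sort (· ≤ ·) with hcldef
  have hsl_len : sl.length = k := Finset.length_sort _
  have hkn : k ≤ n := by
    have := Finset.card_le_card hsub
    simpa [Nat.card_Icc] using this
  have hcl_len : cl.length = n - k := by
    rw [hcldef, Finset.length_sort, hCdef, Finset.card_sdiff_of_subset hsub, Nat.card_Icc]
    simp [hk]
  have hsl_sorted : sl.Pairwise (· < ·) := (Finset.sortedLT_sort S).pairwise
  have hcl_sorted : cl.Pairwise (· < ·) := (Finset.sortedLT_sort C).pairwise
  have hslmem : ∀ i, i < k → sl.getD i 0 ∈ S := by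
    intro i hi
    rw [List.getD_eq_getElem sl 0 (by omega)]
    exact (Finset.mem_sort _).1 (List.getElem_mem _)
  have hclmem : ∀ j, j < n - k → cl.getD j 0 ∈ C := by
    intro j hj
    rw [List.getD_eq_getElem cl 0 (by omega)]
    exact (Finset.mem_sort _).1 (List.getElem_mem _)
  have h1 : ∀ i, i < k → 2*i+3 ≤ sl.getD i 0 := by
    intro i hi
    have hmem := hslmem i hi
    have hcount : (S.filter (fun t => t ≤ sl.getD i 0)).card = i + 1 := by
      rw [card_filter_eq_countP]
      exact countP_getD_self hsl_sorted (by omega)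
    have := hgood _ hmem
    omega
  have h2 : ∀ i, i < k → cl.getD (i+1) 0 < sl.getD i 0 := by
    intro i hi
    set s := sl.getD i 0 with hs
    have hmemS := hslmem i hi
    have hsIcc := hsub hmemS
    rw [Finset.mem_Icc] at hsIcc
    have hcount1 : (S.filter (fun t => t ≤ s)).card = i + 1 := by
      rw [card_filter_eq_countP]
      exact countP_getD_self hsl_sorted (by omega)
    have hfilt_eq : S.filter (fun t => t < s) = (S.filter (fun t => t ≤ s)).erase s := by
      ext x
      simp only [Finset.mem_filter, Finset.mem_erase]
      constructor
      · rintro ⟨hx, hxs⟩; exact ⟨by omega, hx, by omega⟩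
      · rintro ⟨hne, hx, hle⟩; exact ⟨hx, by omega⟩
    have hmemS' : s ∈ S := hmemS
    have hcount2 : (S.filter (fun t => t < s)).card = i := by
      rw [hfilt_eq, Finset.card_erase_of_mem ((Finset.mem_filter.2 ⟨hmemS', le_refl s⟩ : s ∈ S.filter (fun t => t ≤ s))), hcount1]
      omega
    have hCeq : C.filter (fun t => t < s) = Finset.Icc 1 (s-1) \ S := by
      ext x
      simp only [hCdef, Finset.mem_filter, Finset.mem_sdiff, Finset.mem_Icc]
      constructor
      · rintro ⟨⟨⟨hx1, hxn⟩, hxS⟩, hxs⟩; exact ⟨⟨hx1, by omega⟩, hxS⟩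
      · rintro ⟨⟨hx1, hxs⟩, hxS⟩; exact ⟨⟨⟨hx1, by omega⟩, hxS⟩, by omega⟩
    have hIccS : Finset.Icc 1 (s-1) ∩ S = S.filter (fun t => t < s) := by
      ext x
      simp only [Finset.mem_inter, Finset.mem_Icc, Finset.mem_filter]
      constructor
      · rintro ⟨⟨hx1, hxs⟩, hxS⟩; exact ⟨hxS, by omega⟩
      · rintro ⟨hxS, hxs⟩
        have := hsub hxS
        rw [Finset.mem_Icc] at this
        exact ⟨⟨this.1, by omega⟩, hxS⟩
    have hsd := Finset.card_sdiff_add_card_inter (Finset.Icc 1 (s-1)) S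
    rw [hIccS, hcount2, Nat.card_Icc] at hsd
    have e1 : cl.countP (fun x => decide (x < s)) = (Finset.Icc 1 (s-1) \ S).card := by
      rw [← card_filter_eq_countP C (fun t => t < s), hCeq]
    have hs3 : 2*i+3 ≤ s := h1 i hi
    apply getD_lt_of_countP hcl_sorted
    omega
  have hkk : k + 1 ≤ n - k := by
    rcases Nat.eq_zero_or_pos k with hk0 | hk0
    · omega
    · have h3 := h1 (k-1) (by omega)
      have h4 := hsub (hslmem (k-1) (by omega))
      rw [Finset.mem_Icc] at h4
      omega
  set σ : ℕ → ℕ := fun p =>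
    if p % 2 = 0 ∧ p ≤ 2*k then sl.getD (p/2 - 1) 0
    else if p ≤ 2*k+1 then cl.getD ((p-1)/2) 0
    else cl.getD (p - k - 1) 0 with hσdef
  have hσe : ∀ i, i < k → σ (2*i+2) = sl.getD i 0 := by
    intro i hi
    simp only [hσdef]
    rw [if_pos ⟨by omega, by omega⟩]
    congr 1
    omega
  have hσo : ∀ i, i ≤ k → σ (2*i+1) = cl.getD i 0 := by
    intro i hi
    simp only [hσdef]
    rw [if_neg (by omega), if_pos (by omega)]
    congr 1
    omega
  have hσc : ∀ p, 2*k+1 ≤ p → σ p = cl.getD (p - k - 1) 0 := by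
    intro p hp
    rcases eq_or_lt_of_le hp with heq | hlt
    · subst heq
      simp only [hσdef]
      rw [if_neg (by omega), if_pos (by omega)]
      congr 1
      omega
    · simp only [hσdef]
      rw [if_neg (by omega), if_neg (by omega)]
  have htail : ∀ p, 2*k+1 ≤ p → p ≤ n - 1 → σ p < σ (p+1) := by
    intro p hp hpn
    rw [hσc p hp, hσc (p+1) (by omega)]
    have e : p + 1 - k - 1 = p - k := by omega
    rw [e]
    exact sorted_getD_lt hcl_sorted (by omega) (by omega)
  have hpeakmem : ∀ i, i < k →
      ((2 ≤ 2*i+2 ∧ 2*i+2 ≤ n-1) ∧ σ (2*i+1) < σ (2*i+2) ∧ σ (2*i+3) < σ (2*i+2)) := by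
    intro i hi
    have h3 := h1 i hi
    have h4 := hsub (hslmem i hi)
    rw [Finset.mem_Icc] at h4
    refine ⟨⟨by omega, by omega⟩, ?_, ?_⟩
    · rw [hσo i (by omega), hσe i hi]
      calc cl.getD i 0 ≤ cl.getD (i+1) 0 := sorted_getD_le hcl_sorted (by omega) (by omega)
        _ < sl.getD i 0 := h2 i hi
    · have e : 2*i+3 = 2*(i+1)+1 := by ring
      rw [e, hσo (i+1) (by omega), hσe i hi]
      exact h2 i hi
  have hfilt : (Finset.Icc 2 (n-1)).filter (fun p => σ (p-1) < σ p ∧ σ (p+1) < σ p)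
      = (Finset.range k).image (fun i => 2*i+2) := by
    ext p
    simp only [Finset.mem_filter, Finset.mem_Icc, Finset.mem_image, Finset.mem_range]
    constructor
    · rintro ⟨⟨hp2, hpn⟩, hpk1, hpk2⟩
      by_cases hcase : p % 2 = 0 ∧ p ≤ 2*k
      · exact ⟨p/2 - 1, by omega, by omega⟩
      · exfalso
        by_cases hc2 : 2*k+1 ≤ p
        · have := htail p hc2 (by omega)
          omega
        · have hodd : p % 2 = 1 := by omega
          set m := (p-1)/2 with hm
          have hpm : p = 2*m+1 := by omega
          have hm1 : 1 ≤ m := by omega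
          have hmk : m ≤ k := by omega
          have e1 : σ p = cl.getD m 0 := by rw [hpm]; exact hσo m hmk
          have e2 : σ (p-1) = sl.getD (m-1) 0 := by
            have e : p - 1 = 2*(m-1)+2 := by omega
            rw [e]
            exact hσe (m-1) (by omega)
          have h5 := h2 (m-1) (by omega)
          have em : m - 1 + 1 = m := by omega
          rw [em] at h5
          rw [e1, e2] at hpk1
          omega
    · rintro ⟨i, hik, rfl⟩
      have h5 := hpeakmem i hik
      have e1 : 2*i+2-1 = 2*i+1 := by omega
      have e2 : 2*i+2+1 = 2*i+3 := by omega
      rw [e1, e2]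
      exact h5
  have hCP : CP n σ = S := by
    simp only [CP]
    rw [hfilt, Finset.image_image]
    ext y
    simp only [Finset.mem_image, Finset.mem_range, Function.comp]
    constructor
    · rintro ⟨i, hik, rfl⟩
      rw [hσe i hik]
      exact hslmem i hik
    · intro hy
      have hysl : y ∈ sl := (Finset.mem_sort _).2 hy
      obtain ⟨i, hilen, hieq⟩ := List.mem_iff_getElem.1 hysl
      refine ⟨i, by omega, ?_⟩
      rw [hσe i (by omega), List.getD_eq_getElem sl 0 (by omega)]
      exact hieq
  have hmaps : ∀ p, 1 ≤ p → p ≤ n → σ p ∈ Finset.Icc 1 n := by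
    intro p hp1 hpn
    by_cases hc : 2*k+1 ≤ p
    · rw [hσc p hc]
      exact (Finset.mem_sdiff.1 (hclmem (p-k-1) (by omega))).1
    · rcases Nat.even_or_odd p with he | ho
      · obtain ⟨m, hm⟩ := he
        have e : σ p = sl.getD (m-1) 0 := by
          have e2 : p = 2*(m-1)+2 := by omega
          rw [e2]
          exact hσe (m-1) (by omega)
        rw [e]
        exact hsub (hslmem (m-1) (by omega))
      · obtain ⟨m, hm⟩ := ho
        have e : σ p = cl.getD m 0 := by
          rw [hm]
          exact hσo m (by omega)
        rw [e]
        exact (Finset.mem_sdiff.1 (hclmem m (by omega))).1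
  have hsurj : ∀ y ∈ Finset.Icc 1 n, ∃ p, ∃ _ : p ∈ Finset.Icc 1 n, σ p = y := by
    intro y hy
    by_cases hyS : y ∈ S
    · have hysl : y ∈ sl := (Finset.mem_sort _).2 hyS
      obtain ⟨i, hilen, hieq⟩ := List.mem_iff_getElem.1 hysl
      refine ⟨2*i+2, Finset.mem_Icc.2 ⟨by omega, by omega⟩, ?_⟩
      rw [hσe i (by omega), List.getD_eq_getElem sl 0 (by omega)]
      exact hieq
    · have hyC : y ∈ C := Finset.mem_sdiff.2 ⟨hy, hyS⟩
      have hycl : y ∈ cl := (Finset.mem_sort _).2 hyC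
      obtain ⟨j, hjlen, hjeq⟩ := List.mem_iff_getElem.1 hycl
      by_cases hjk : j ≤ k
      · refine ⟨2*j+1, Finset.mem_Icc.2 ⟨by omega, by omega⟩, ?_⟩
        rw [hσo j hjk, List.getD_eq_getElem cl 0 (by omega)]
        exact hjeq
      · refine ⟨j+k+1, Finset.mem_Icc.2 ⟨by omega, by omega⟩, ?_⟩
        rw [hσc (j+k+1) (by omega)]
        have e : j+k+1-k-1 = j := by omega
        rw [e, List.getD_eq_getElem cl 0 (by omega)]
        exact hjeq
  refine ⟨σ, ⟨?_, ?_, ?_⟩, hCP⟩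
  · intro x hx
    rw [Set.mem_Icc] at hx
    have := hmaps x hx.1 hx.2
    rw [Finset.mem_Icc] at this
    exact Set.mem_Icc.2 this
  · intro a ha b hb hab
    rw [Set.mem_Icc] at ha hb
    exact Finset.inj_on_of_surj_on_of_card_le (s := Finset.Icc 1 n) (t := Finset.Icc 1 n)
      (fun p _ => σ p) (fun p hp => by rw [Finset.mem_Icc] at hp; exact hmaps p hp.1 hp.2)
      hsurj (le_refl _) (Finset.mem_Icc.2 ha) (Finset.mem_Icc.2 hb) hab
  · intro y hy
    rw [Set.mem_Icc] at hy
    obtain ⟨p, hp, hpe⟩ := hsurj y (Finset.mem_Icc.2 hy)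
    rw [Finset.mem_Icc] at hp
    exact ⟨p, Set.mem_Icc.2 hp, hpe⟩

lemma mem_Pn_iff (n : ℕ) (hn : 1 ≤ n) (S : Finset ℕ) :
    S ∈ Pn n ↔ (S ⊆ Finset.Icc 1 n ∧ ∀ s ∈ S, 2 * (S.filter (fun t => t ≤ s)).card + 1 ≤ s) := by
  classical
  constructor
  · intro hS
    simp only [Pn, Finset.mem_filter, Finset.mem_powerset] at hS
    obtain ⟨hsub, σ, h2, h3⟩ := hS
    subst h3
    exact ⟨CP_subset n h2, good_count n h2⟩
  · rintro ⟨hsub, h2⟩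
    simp only [Pn, Finset.mem_filter, Finset.mem_powerset]
    exact ⟨hsub, exists_perm_of_good n hn S hsub h2⟩

/-- Theorem 3.3 (even case): for even `n`, `P_{n+1} ≅ 2 × P_n`, via
`S ↦ (1, S \ {n+1})` if `n+1 ∈ S` and `S ↦ (0, S)` otherwise. -/
theorem Pn_succ_orderIso_even (n : ℕ) (hn : 3 ≤ n) (hev : Even n) :
    ∃ e : {S : Finset ℕ // S ∈ Pn (n + 1)} ≃o (Fin 2 × {S : Finset ℕ // S ∈ Pn n}),
      ∀ S : {S : Finset ℕ // S ∈ Pn (n + 1)},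
        ((e S).1 = 1 ↔ (n + 1) ∈ S.val) ∧ ((e S).2 : Finset ℕ) = S.val.erase (n + 1) := by
  classical
  have h1n : 1 ≤ n := by omega
  have h1n1 : 1 ≤ n + 1 := by omega
  have hA : ∀ S : Finset ℕ, S ∈ Pn (n+1) → S.erase (n+1) ∈ Pn n := by
    intro S hS
    rw [mem_Pn_iff _ h1n1] at hS
    rw [mem_Pn_iff _ h1n]
    obtain ⟨hsub, hgood⟩ := hS
    constructor
    · intro x hx
      rw [Finset.mem_erase] at hx
      have := hsub hx.2
      rw [Finset.mem_Icc] at this ⊢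
      omega
    · intro s hs
      rw [Finset.mem_erase] at hs
      have hsIcc := hsub hs.2
      rw [Finset.mem_Icc] at hsIcc
      have hfe : (S.erase (n+1)).filter (fun t => t ≤ s) = S.filter (fun t => t ≤ s) := by
        ext x
        simp only [Finset.mem_filter, Finset.mem_erase]
        constructor
        · rintro ⟨⟨hne, hx⟩, hle⟩
          exact ⟨hx, hle⟩
        · rintro ⟨hx, hle⟩
          refine ⟨⟨?_, hx⟩, hle⟩
          have hs1 := hs.1
          omega
      rw [hfe]
      exact hgood s hs.2
  have hB : ∀ S : Finset ℕ, S ∈ Pn n → S ∈ Pn (n+1) := by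
    intro S hS
    rw [mem_Pn_iff _ h1n] at hS
    rw [mem_Pn_iff _ h1n1]
    refine ⟨fun x hx => ?_, hS.2⟩
    have := hS.1 hx
    rw [Finset.mem_Icc] at this ⊢
    omega
  have hnotin : ∀ S : Finset ℕ, S ∈ Pn n → (n+1) ∉ S := by
    intro S hS hcon
    rw [mem_Pn_iff _ h1n] at hS
    have := hS.1 hcon
    rw [Finset.mem_Icc] at this
    omega
  have hC : ∀ S : Finset ℕ, S ∈ Pn n → insert (n+1) S ∈ Pn (n+1) := by
    intro S hS
    have hni := hnotin S hS
    rw [mem_Pn_iff _ h1n] at hS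
    rw [mem_Pn_iff _ h1n1]
    obtain ⟨hsub, hgood⟩ := hS
    have hsub1 : insert (n+1) S ⊆ Finset.Icc 1 (n+1) := by
      intro x hx
      rcases Finset.mem_insert.1 hx with rfl | hx
      · rw [Finset.mem_Icc]; omega
      · have := hsub hx
        rw [Finset.mem_Icc] at this ⊢
        omega
    refine ⟨hsub1, ?_⟩
    intro s hs
    rcases Finset.mem_insert.1 hs with rfl | hs
    · have hfe : (insert (n+1) S).filter (fun t => t ≤ n+1) = insert (n+1) S := by
        apply Finset.filter_true_of_mem
        intro x hx
        have := hsub1 hx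
        rw [Finset.mem_Icc] at this
        omega
      rw [hfe, Finset.card_insert_of_notMem hni]
      rcases Finset.eq_empty_or_nonempty S with rfl | hne
      · simp
        omega
      · have hmS : S.max' hne ∈ S := S.max'_mem hne
        have hfm : S.filter (fun t => t ≤ S.max' hne) = S := by
          apply Finset.filter_true_of_mem
          intro x hx
          exact S.le_max' x hx
        have h5 := hgood _ hmS
        rw [hfm] at h5
        have h6 : S.max' hne ≤ n := by
          have := hsub hmS
          rw [Finset.mem_Icc] at this
          omega
        obtain ⟨r, hr⟩ := hev
        omega
    · have hsn : s ≤ n := by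
        have := hsub hs
        rw [Finset.mem_Icc] at this
        omega
      have hfe : (insert (n+1) S).filter (fun t => t ≤ s) = S.filter (fun t => t ≤ s) := by
        ext x
        simp only [Finset.mem_filter, Finset.mem_insert]
        constructor
        · rintro ⟨hor, hle⟩
          rcases hor with rfl | hx
          · exact absurd hle (by omega)
          · exact ⟨hx, hle⟩
        · rintro ⟨hx, hle⟩
          exact ⟨Or.inr hx, hle⟩
      rw [hfe]
      exact hgood s hs
  let f : {S : Finset ℕ // S ∈ Pn (n + 1)} → Fin 2 × {S : Finset ℕ // S ∈ Pn n} :=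
    fun S => (if (n+1) ∈ S.val then 1 else 0, ⟨S.val.erase (n+1), hA S.val S.2⟩)
  let g : Fin 2 × {S : Finset ℕ // S ∈ Pn n} → {S : Finset ℕ // S ∈ Pn (n + 1)} :=
    fun x => if h : x.1 = 1 then ⟨insert (n+1) x.2.val, hC x.2.val x.2.2⟩
      else ⟨x.2.val, hB x.2.val x.2.2⟩
  have hgf : ∀ S, g (f S) = S := by
    intro S
    by_cases hmem : (n+1) ∈ S.val
    · simp only [f, g, if_pos hmem]
      rw [dif_pos trivial]
      exact Subtype.ext (Finset.insert_erase hmem)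
    · simp only [f, g, if_neg hmem]
      rw [dif_neg (by decide : ¬((0 : Fin 2) = 1))]
      exact Subtype.ext (Finset.erase_eq_of_notMem hmem)
  have hfg : ∀ x, f (g x) = x := by
    rintro ⟨b, T⟩
    have h0 : (n+1) ∉ T.val := hnotin T.val T.2
    by_cases hb : b = 1
    · subst hb
      simp only [f, g]
      rw [dif_pos trivial]
      simp only [if_pos (Finset.mem_insert_self (n+1) T.val)]
      exact Prod.ext rfl (Subtype.ext (Finset.erase_insert h0))
    · have hb0 : b = 0 := by
        have h2 := b.isLt
        have h3 : b.val ≠ 1 := fun hc => hb (Fin.ext (by simp [hc]))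
        exact Fin.ext (by omega)
      subst hb0
      simp only [f, g]
      rw [dif_neg hb]
      simp only [if_neg h0]
      exact Prod.ext rfl (Subtype.ext (Finset.erase_eq_of_notMem h0))
  let e : {S : Finset ℕ // S ∈ Pn (n + 1)} ≃o (Fin 2 × {S : Finset ℕ // S ∈ Pn n}) :=
    { toFun := f
      invFun := g
      left_inv := hgf
      right_inv := hfg
      map_rel_iff' := by
        intro S T
        simp only [Equiv.coe_fn_mk, f]
        rw [Prod.le_def]
        dsimp only
        constructor
        · rintro ⟨hfst, hsnd⟩
          have h2' : S.val.erase (n+1) ⊆ T.val.erase (n+1) := hsnd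
          have hST : S.val ⊆ T.val := by
            intro x hx
            by_cases hxe : x = n+1
            · subst hxe
              by_contra hxT
              rw [if_pos hx, if_neg hxT] at hfst
              have hcon : (1 : Fin 2) ≤ 0 := hfst
              exact absurd hcon (by decide)
            · exact (Finset.mem_erase.1 (h2' (Finset.mem_erase.2 ⟨hxe, hx⟩))).2
          exact hST
        · intro h
          have h' : S.val ⊆ T.val := h
          constructor
          · by_cases hxS : (n+1) ∈ S.val
            · rw [if_pos hxS, if_pos (h' hxS)]
            · rw [if_neg hxS]
              exact Fin.zero_le _
          · intro x hx
            rw [Finset.mem_erase] at hx ⊢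
            exact ⟨hx.1, h' hx.2⟩ }
  refine ⟨e, fun S => ⟨?_, ?_⟩⟩
  · show ((if (n+1) ∈ S.val then 1 else 0 : Fin 2) = 1 ↔ (n+1) ∈ S.val)
    by_cases hmem : (n+1) ∈ S.val
    · simp [hmem]
    · simp only [if_neg hmem]
      constructor
      · intro hcon
        exact absurd hcon (by decide)
      · intro hcon
        exact absurd hcon hmem
  · rfl
end
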